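/- Assume the ideal J is prime and the image of X₁ − X₂ in A = ℂ[X₁,Y₁,X₂,Y₂]/J is nonzero. The ring automorphism of ℂ[X₁,Y₁,X₂,Y₂] swapping X₁ ↔ X₂ and Y₁ ↔ Y₂ preserves J and hence induces an involutive field automorphism τ of Frac(A). Then the fixed field {g ∈ Frac(A) : τ(g) = g} equals the smallest subfield of Frac(A) containing all constants (the image of ℂ) together with the four elements ū₂, ū₄, ū₅, ū₇. -/

import Mathlib

/- Context: Q(X) = X⁷ + y₄X⁵ − y₆X⁴ + y₈X³ − y₁₀X² + y₁₂X − y₁₄; J is the ideal of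
ℂ[X₁,Y₁,X₂,Y₂] (variables 0 ↦ X₁, 1 ↦ Y₁, 2 ↦ X₂, 3 ↦ Y₂) generated by Y₁² − Q(X₁)
and Y₂² − Q(X₂); A = ℂ[X₁,Y₁,X₂,Y₂]/J.  The swap automorphism exchanges
X₁ ↔ X₂ and Y₁ ↔ Y₂; it preserves J and hence induces an involutive field
automorphism τ of Frac(A), characterized by its compatibility with the swap on
representatives. -/

open MvPolynomial

set_option synthInstance.maxHeartbeats 1000000
set_option maxHeartbeats 1000000

set_option maxHeartbeats 10000000

noncomputable section

/-- `Q(Xᵢ)` as a polynomial in `ℂ[X₁,Y₁,X₂,Y₂]`. -/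
def Qp (y4 y6 y8 y10 y12 y14 : ℂ) (i : Fin 4) : MvPolynomial (Fin 4) ℂ :=
  X i ^ 7 + C y4 * X i ^ 5 - C y6 * X i ^ 4 + C y8 * X i ^ 3
    - C y10 * X i ^ 2 + C y12 * X i - C y14

/-- The ideal `J = (Y₁² − Q(X₁), Y₂² − Q(X₂))`. -/
def Jideal (y4 y6 y8 y10 y12 y14 : ℂ) : Ideal (MvPolynomial (Fin 4) ℂ) :=
  Ideal.span {X 1 ^ 2 - Qp y4 y6 y8 y10 y12 y14 0, X 3 ^ 2 - Qp y4 y6 y8 y10 y12 y14 2}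

/-- The map on variables induced by swapping X₁ ↔ X₂ and Y₁ ↔ Y₂. -/
def swapFun : Fin 4 → Fin 4 := ![2, 3, 0, 1]

/-- Assume `J` is prime and `x₁ − x₂ ≠ 0` in `A`.  The swap automorphism preserves `J`
and induces an involutive field automorphism `τ` of `Frac(A)`.  Then the fixed field
`{g : τ(g) = g}` is the smallest subfield of `Frac(A)` containing the constants
(the image of ℂ) together with `ū₂, ū₄, ū₅, ū₇`. -/
theorem statement6 (y4 y6 y8 y10 y12 y14 : ℂ)
    (hJ : (Jideal y4 y6 y8 y10 y12 y14).IsPrime)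
    (hx : Ideal.Quotient.mk (Jideal y4 y6 y8 y10 y12 y14) (X 0 - X 2) ≠ 0)
    (hswap : ∀ f ∈ Jideal y4 y6 y8 y10 y12 y14,
      rename swapFun f ∈ Jideal y4 y6 y8 y10 y12 y14) :
    haveI := hJ
    let ι : MvPolynomial (Fin 4) ℂ →
        FractionRing (MvPolynomial (Fin 4) ℂ ⧸ Jideal y4 y6 y8 y10 y12 y14) :=
      fun f => algebraMap (MvPolynomial (Fin 4) ℂ ⧸ Jideal y4 y6 y8 y10 y12 y14)
        (FractionRing (MvPolynomial (Fin 4) ℂ ⧸ Jideal y4 y6 y8 y10 y12 y14))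
        (Ideal.Quotient.mk (Jideal y4 y6 y8 y10 y12 y14) f)
    let u2 := (ι (X 0) + ι (X 2)) / 2
    let u4 := (ι (X 0) - ι (X 2)) ^ 2 / 4
    let u5 := (ι (X 1) - ι (X 3)) / (ι (X 0) - ι (X 2))
    let u7 := (ι (X 1) + ι (X 3)) / 2
    ∀ τ : FractionRing (MvPolynomial (Fin 4) ℂ ⧸ Jideal y4 y6 y8 y10 y12 y14) ≃+*
        FractionRing (MvPolynomial (Fin 4) ℂ ⧸ Jideal y4 y6 y8 y10 y12 y14),
      (∀ f : MvPolynomial (Fin 4) ℂ, τ (ι f) = ι (rename swapFun f)) →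
      Function.Involutive τ →
      {g | τ g = g} =
        (Subfield.closure ((Set.range fun c : ℂ => ι (C c)) ∪ {u2, u4, u5, u7}) :
          Set (FractionRing (MvPolynomial (Fin 4) ℂ ⧸ Jideal y4 y6 y8 y10 y12 y14))) := by
  haveI := hJ
  intro ι u2 u4 u5 u7 τ hτ hinv
  classical
  let A := MvPolynomial (Fin 4) ℂ ⧸ Jideal y4 y6 y8 y10 y12 y14
  let F := FractionRing (MvPolynomial (Fin 4) ℂ ⧸ Jideal y4 y6 y8 y10 y12 y14)
  let φ : MvPolynomial (Fin 4) ℂ →+*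
      FractionRing (MvPolynomial (Fin 4) ℂ ⧸ Jideal y4 y6 y8 y10 y12 y14) :=
    (algebraMap (MvPolynomial (Fin 4) ℂ ⧸ Jideal y4 y6 y8 y10 y12 y14)
      (FractionRing (MvPolynomial (Fin 4) ℂ ⧸ Jideal y4 y6 y8 y10 y12 y14))).comp
      (Ideal.Quotient.mk (Jideal y4 y6 y8 y10 y12 y14))
  have hι : ∀ f, ι f = φ f := fun _ => rfl
  haveI : CharZero A := charZero_of_injective_algebraMap
    (RingHom.injective (algebraMap ℂ A))
  haveI : CharZero F := charZero_of_injective_algebraMap (IsFractionRing.injective A F)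
  -- τ on images
  have hτC : ∀ c : ℂ, τ (φ (C c)) = φ (C c) := by
    intro c
    have := hτ (C c)
    rw [hι, hι, rename_C] at this
    exact this
  have hτX : ∀ i : Fin 4, τ (φ (X i)) = φ (X (swapFun i)) := by
    intro i
    have := hτ (X i)
    rw [hι, hι, rename_X] at this
    exact this
  have hs0 : swapFun 0 = 2 := rfl
  have hs1 : swapFun 1 = 3 := rfl
  have hs2 : swapFun 2 = 0 := rfl
  have hs3 : swapFun 3 = 1 := rfl
  have hτ0 : τ (φ (X 0)) = φ (X 2) := by rw [hτX 0, hs0]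
  have hτ1 : τ (φ (X 1)) = φ (X 3) := by rw [hτX 1, hs1]
  have hτ2 : τ (φ (X 2)) = φ (X 0) := by rw [hτX 2, hs2]
  have hτ3 : τ (φ (X 3)) = φ (X 1) := by rw [hτX 3, hs3]
  -- δ
  let δ := φ (X 0) - φ (X 2)
  have hδdef : δ = φ (X 0) - φ (X 2) := rfl
  have hδ : δ ≠ 0 := by
    intro h
    apply hx
    apply IsFractionRing.injective A F
    rw [map_zero, map_sub, map_sub]
    exact h
  have hτδ : τ δ = -δ := by
    rw [hδdef, map_sub, hτ0, hτ2]
    ring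
  -- unfold the u's
  have hu2 : u2 = (φ (X 0) + φ (X 2)) / 2 := rfl
  have hu4 : u4 = δ ^ 2 / 4 := rfl
  have hu5 : u5 = (φ (X 1) - φ (X 3)) / δ := rfl
  have hu7 : u7 = (φ (X 1) + φ (X 3)) / 2 := rfl
  let Kf := Subfield.closure ((Set.range fun c : ℂ => ι (C c)) ∪ {u2, u4, u5, u7})
  have hKf : Kf = Subfield.closure ((Set.range fun c : ℂ => ι (C c)) ∪ {u2, u4, u5, u7}) := rfl
  have hCK : ∀ c : ℂ, φ (C c) ∈ Kf := fun c =>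
    Subfield.subset_closure (Or.inl ⟨c, rfl⟩)
  have hu2K : u2 ∈ Kf := Subfield.subset_closure (Or.inr (by simp))
  have hu4K : u4 ∈ Kf := Subfield.subset_closure (Or.inr (by simp))
  have hu5K : u5 ∈ Kf := Subfield.subset_closure (Or.inr (by simp))
  have hu7K : u7 ∈ Kf := Subfield.subset_closure (Or.inr (by simp))
  -- K is fixed by τ
  have hKfix : ∀ g ∈ Kf, τ g = g := by
    have hle : Kf ≤ RingHom.eqLocusField (τ : F →+* F) (RingHom.id F) := by
      rw [hKf]
      apply Subfield.closure_le.2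
      rintro z (⟨c, rfl⟩ | hz)
      · show τ (ι (C c)) = ι (C c)
        rw [hι]; exact hτC c
      · simp only [Set.mem_insert_iff, Set.mem_singleton_iff] at hz
        rcases hz with rfl | rfl | rfl | rfl
        · show τ u2 = u2
          rw [hu2, map_div₀, map_add, hτ0, hτ2, map_ofNat]
          ring
        · show τ u4 = u4
          rw [hu4, map_div₀, map_pow, hτδ, map_ofNat]
          ring
        · show τ u5 = u5
          rw [hu5, map_div₀, map_sub, hτ1, hτ3, hτδ]
          rw [div_eq_div_iff (neg_ne_zero.mpr hδ) hδ]
          ring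
        · show τ u7 = u7
          rw [hu7, map_div₀, map_add, hτ1, hτ3, map_ofNat]
          ring
    intro g hg
    exact hle hg
  have hδK : δ ∉ Kf := by
    intro h
    have h1 := hKfix δ h
    rw [hτδ] at h1
    have h2 : (2 : F) * δ = 0 := by linear_combination -h1
    rcases mul_eq_zero.mp h2 with h3 | h3
    · exact two_ne_zero h3
    · exact hδ h3
  have h2K : (2 : F) ∈ Kf := by
    have := Kf.add_mem Kf.one_mem Kf.one_mem
    norm_num at this
    norm_num
  have h4K : (4 : F) ∈ Kf := by
    have := Kf.add_mem h2K h2K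
    norm_num at this
    norm_num
  have h4u4 : δ ^ 2 = 4 * u4 := by rw [hu4]; field_simp; norm_num
  -- The subfield Kf + Kf·δ
  let T : Subfield F :=
    { carrier := {z | ∃ a ∈ Kf, ∃ b ∈ Kf, z = a + b * δ}
      zero_mem' := ⟨0, Kf.zero_mem, 0, Kf.zero_mem, by ring⟩
      one_mem' := ⟨1, Kf.one_mem, 0, Kf.zero_mem, by ring⟩
      add_mem' := by
        rintro x y ⟨a, ha, b, hb, rfl⟩ ⟨c, hc, d, hd, rfl⟩
        exact ⟨a + c, Kf.add_mem ha hc, b + d, Kf.add_mem hb hd, by ring⟩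
      neg_mem' := by
        rintro x ⟨a, ha, b, hb, rfl⟩
        exact ⟨-a, Kf.neg_mem ha, -b, Kf.neg_mem hb, by ring⟩
      mul_mem' := by
        rintro x y ⟨a, ha, b, hb, rfl⟩ ⟨c, hc, d, hd, rfl⟩
        refine ⟨a * c + b * d * (4 * u4),
          Kf.add_mem (Kf.mul_mem ha hc)
            (Kf.mul_mem (Kf.mul_mem hb hd) (Kf.mul_mem h4K hu4K)),
          a * d + b * c, Kf.add_mem (Kf.mul_mem ha hd) (Kf.mul_mem hb hc), ?_⟩
        linear_combination b * d * h4u4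
      inv_mem' := by
        rintro x ⟨a, ha, b, hb, rfl⟩
        by_cases hb0 : b = 0
        · subst hb0
          exact ⟨a⁻¹, Kf.inv_mem ha, 0, Kf.zero_mem, by simp⟩
        · have hD : a ^ 2 - b ^ 2 * δ ^ 2 ≠ 0 := by
            intro hD0
            have h1 : (a / b - δ) * (a / b + δ) = 0 := by
              field_simp
              linear_combination hD0
            rcases mul_eq_zero.mp h1 with h | h
            · apply hδK
              have hδe : δ = a / b := by linear_combination -h
              rw [hδe]
              exact Kf.div_mem ha hb
            · apply hδK
              have hδe : δ = -(a / b) := by linear_combination h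
              rw [hδe]
              exact Kf.neg_mem (Kf.div_mem ha hb)
          have hDK : a ^ 2 - b ^ 2 * δ ^ 2 ∈ Kf := by
            rw [h4u4]
            exact Kf.sub_mem (Kf.pow_mem ha 2)
              (Kf.mul_mem (Kf.pow_mem hb 2) (Kf.mul_mem h4K hu4K))
          refine ⟨a / (a ^ 2 - b ^ 2 * δ ^ 2), Kf.div_mem ha hDK,
            -b / (a ^ 2 - b ^ 2 * δ ^ 2), Kf.div_mem (Kf.neg_mem hb) hDK, ?_⟩
          apply inv_eq_of_mul_eq_one_right
          field_simp
          linear_combination mul_inv_cancel₀ hD }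
  have hmemT : ∀ z : F, (∃ a ∈ Kf, ∃ b ∈ Kf, z = a + b * δ) ↔ z ∈ T := fun _ => Iff.rfl
  have hX0T : φ (X 0) ∈ T :=
    ⟨u2, hu2K, (2 : F)⁻¹, Kf.inv_mem h2K, by rw [hu2, hδdef]; ring⟩
  have hX2T : φ (X 2) ∈ T :=
    ⟨u2, hu2K, -(2 : F)⁻¹, Kf.neg_mem (Kf.inv_mem h2K), by rw [hu2, hδdef]; ring⟩
  have hu5δ : u5 * δ = φ (X 1) - φ (X 3) := by
    rw [hu5]
    exact div_mul_cancel₀ _ hδ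
  have hX1T : φ (X 1) ∈ T :=
    ⟨u7, hu7K, u5 * (2 : F)⁻¹, Kf.mul_mem hu5K (Kf.inv_mem h2K), by
      rw [hu7]; linear_combination (-(2 : F)⁻¹) * hu5δ⟩
  have hX3T : φ (X 3) ∈ T :=
    ⟨u7, hu7K, -(u5 * (2 : F)⁻¹), Kf.neg_mem (Kf.mul_mem hu5K (Kf.inv_mem h2K)), by
      rw [hu7]; linear_combination ((2 : F)⁻¹) * hu5δ⟩
  have hXT : ∀ i : Fin 4, φ (X i) ∈ T := by
    intro i
    fin_cases i
    exacts [hX0T, hX1T, hX2T, hX3T]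
  have hφT : ∀ f : MvPolynomial (Fin 4) ℂ, φ f ∈ T := by
    intro f
    induction f using MvPolynomial.induction_on with
    | C c => exact ⟨φ (C c), hCK c, 0, Kf.zero_mem, by ring⟩
    | add p q hp hq => rw [map_add]; exact T.add_mem hp hq
    | mul_X p i hp => rw [map_mul]; exact T.mul_mem hp (hXT i)
  have hT : ∀ z : F, z ∈ T := by
    intro z
    obtain ⟨a, b, -, rfl⟩ := IsFractionRing.div_surjective
      (A := MvPolynomial (Fin 4) ℂ ⧸ Jideal y4 y6 y8 y10 y12 y14)
      (K := FractionRing (MvPolynomial (Fin 4) ℂ ⧸ Jideal y4 y6 y8 y10 y12 y14)) z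
    obtain ⟨p, rfl⟩ := Ideal.Quotient.mk_surjective a
    obtain ⟨q, rfl⟩ := Ideal.Quotient.mk_surjective b
    exact T.div_mem (hφT p) (hφT q)
  -- conclusion
  ext g
  simp only [Set.mem_setOf_eq, SetLike.mem_coe]
  constructor
  · intro hg
    obtain ⟨a, ha, b, hb, rfl⟩ := hT g
    have hτg : τ (a + b * δ) = a - b * δ := by
      rw [map_add, map_mul, hKfix a ha, hKfix b hb, hτδ]
      ring
    have heq : a - b * δ = a + b * δ := by rw [← hτg, hg]
    have h2 : (2 : F) * (b * δ) = 0 := by linear_combination -heq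
    rcases mul_eq_zero.mp h2 with h3 | h3
    · exact absurd h3 two_ne_zero
    · rcases mul_eq_zero.mp h3 with h4 | h4
      · rw [h4, zero_mul, add_zero]
        exact ha
      · exact absurd h4 hδ
  · intro hg
    exact hKfix g hg

end
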